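/- All eigenvalues except the largest one are bounded for semiconvex solutions of the sigma-2 equation: let K > 0 and λ = (λ₁,…,λₙ) ∈ ℝⁿ with λ₁ ≥ λ₂ ≥ ⋯ ≥ λₙ ≥ −K, σ₂(λ) = 1 and σ₁(λ) > 0. Then for every k ≥ 2, |λ_k| ≤ C(n,K) where one may take C(n,K) = max(K, (n+1)[2 + 2(n−2)K]). -/
import Mathlib


/-- All eigenvalues except the largest are bounded for semiconvex lambda with sigma_2 = 1. -/
theorem sigma2_lower_eigenvalues_bounded
    (n : ℕ) (hn : 2 ≤ n) (K : ℝ) (hK : 0 < K) (l : Fin n → ℝ)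
    (hsort : ∀ i j : Fin n, i ≤ j → l j ≤ l i)
    (hsc : -K ≤ l ⟨n - 1, by omega⟩)
    (heq : ((∑ i, l i) ^ 2 - ∑ i, (l i) ^ 2) / 2 = 1)
    (hpos : 0 < ∑ i, l i) :
    ∀ k : Fin n, 1 ≤ (k : ℕ) →
      |l k| ≤ max K (((n : ℝ) + 1) * (2 + 2 * ((n : ℝ) - 2) * K)) := by
  intro k hk
  have hn2 : (2:ℝ) ≤ (n:ℝ) := by exact_mod_cast hn
  set C : ℝ := ((n : ℝ) + 1) * (2 + 2 * ((n : ℝ) - 2) * K) with hC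
  have hlast : ∀ i : Fin n, -K ≤ l i := by
    intro i
    refine le_trans hsc (hsort i ⟨n - 1, by omega⟩ ?_)
    have := i.2
    simp only [Fin.le_def]
    omega
  set i0 : Fin n := ⟨0, by omega⟩ with hi0
  set i1 : Fin n := ⟨1, by omega⟩ with hi1
  have hbk : l k ≤ l i1 := by
    refine hsort i1 k ?_
    simp only [Fin.le_def, hi1]
    omega
  have hlow : -(max K C) ≤ l k := le_trans (neg_le_neg (le_max_left K C)) (hlast k)
  rw [abs_le]
  refine ⟨hlow, le_trans hbk ?_⟩
  by_contra hcon
  push_neg at hcon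
  have hbK : K < l i1 := lt_of_le_of_lt (le_max_left K C) hcon
  have hbC : C < l i1 := lt_of_le_of_lt (le_max_right K C) hcon
  have hab : l i1 ≤ l i0 := by
    refine hsort i0 i1 ?_
    simp [Fin.le_def, hi0, hi1]
  have hi1mem : i1 ∈ Finset.univ.erase i0 := by
    simp [Finset.mem_erase, hi0, hi1, Fin.ext_iff]
  set t := (Finset.univ.erase i0).erase i1 with ht
  have hsplit : ∀ f : Fin n → ℝ, ∑ i, f i = f i0 + f i1 + ∑ i ∈ t, f i := by
    intro f
    rw [← Finset.add_sum_erase _ f (Finset.mem_univ i0), ← Finset.add_sum_erase _ f hi1mem]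
    ring
  have htcard : (t.card : ℝ) = (n : ℝ) - 2 := by
    have : t.card = n - 2 := by
      rw [ht, Finset.card_erase_of_mem hi1mem, Finset.card_erase_of_mem (Finset.mem_univ i0)]
      simp only [Finset.card_univ, Fintype.card_fin]
      omega
    rw [this]
    push_cast [Nat.cast_sub hn]
    ring
  have htmem : ∀ i ∈ t, -K ≤ l i ∧ l i ≤ l i1 := by
    intro i hi
    refine ⟨hlast i, hsort i1 i ?_⟩
    rw [ht, Finset.mem_erase, Finset.mem_erase] at hi
    have h1 : i.val ≠ 1 := fun h => hi.1 (Fin.ext (by simp [hi1, h]))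
    have h0 : i.val ≠ 0 := fun h => hi.2.1 (Fin.ext (by simp [hi0, h]))
    simp only [Fin.le_def, hi1]
    omega
  -- lower bound on tail sum
  have hS : -(((n:ℝ) - 2) * K) ≤ ∑ i ∈ t, l i := by
    have := Finset.card_nsmul_le_sum t l (-K) (fun i hi => (htmem i hi).1)
    rw [nsmul_eq_mul, htcard] at this
    linarith
  -- upper bound on tail sum of squares
  have hT : ∑ i ∈ t, (l i)^2 ≤ l i1 * (∑ i ∈ t, l i) + ((n:ℝ) - 2) * (K^2 + K * l i1) := by
    have hpt : ∀ i ∈ t, (l i)^2 ≤ l i1 * l i + (K^2 + K * l i1) := by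
      intro i hi
      obtain ⟨h1, h2⟩ := htmem i hi
      nlinarith [mul_nonneg (by linarith : (0:ℝ) ≤ l i + K) (by linarith : (0:ℝ) ≤ l i1 - l i)]
    calc ∑ i ∈ t, (l i)^2 ≤ ∑ i ∈ t, (l i1 * l i + (K^2 + K * l i1)) :=
          Finset.sum_le_sum hpt
      _ = l i1 * (∑ i ∈ t, l i) + ((n:ℝ) - 2) * (K^2 + K * l i1) := by
          rw [Finset.sum_add_distrib, ← Finset.mul_sum, Finset.sum_const, nsmul_eq_mul, htcard]
  have heq2 : (∑ i, l i) ^ 2 - ∑ i, (l i) ^ 2 = 2 := by linarith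
  rw [hsplit l, hsplit (fun i => (l i)^2)] at heq2
  set a := l i0
  set b := l i1
  set S := ∑ i ∈ t, l i
  set T := ∑ i ∈ t, (l i)^2
  -- now pure algebra
  set m : ℝ := ((n:ℝ) - 2) * K with hmdef
  have hm : (0:ℝ) ≤ m := by
    rw [hmdef]; exact mul_nonneg (by linarith) hK.le
  have hbpos : (0:ℝ) < b := lt_trans hK hbK
  have hapos : (0:ℝ) < a := lt_of_lt_of_le hbpos hab
  have hb6 : 6 + 6 * m < b := by
    have h1 : C = 2 * ((n:ℝ)+1) + 2 * ((n:ℝ)+1) * m := by rw [hC, hmdef]; ring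
    have h2 : 6 + 6 * m ≤ 2 * ((n:ℝ)+1) + 2 * ((n:ℝ)+1) * m := by
      nlinarith [mul_nonneg (by linarith : (0:ℝ) ≤ (n:ℝ) - 2) hm]
    linarith [hbC, h1.symm.le]
  have hT' : T ≤ b * S + m * K + m * b := by
    have : ((n:ℝ) - 2) * (K ^ 2 + K * b) = m * K + m * b := by rw [hmdef]; ring
    linarith [hT, this.le]
  nlinarith [sq_nonneg S, mul_nonneg hapos.le (by linarith [hS] : (0:ℝ) ≤ S + m),
    mul_nonneg hbpos.le (by linarith [hS] : (0:ℝ) ≤ S + m),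
    mul_nonneg hm (by linarith : (0:ℝ) ≤ b - K),
    mul_nonneg (by linarith : (0:ℝ) ≤ a - b) (by linarith : (0:ℝ) ≤ b - m),
    mul_pos hbpos (by linarith : (0:ℝ) < 2*b - 5*m - 12)]
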